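/- Let v₁, …, v_m be nonzero vectors of V and, for each i, let π_i : 𝔽₂[V] → 𝔽₂[V/span{v_i}] be the algebra homomorphism induced by the quotient map, and let I_i be the augmentation ideal of 𝔽₂[V/span{v_i}]. Let q ≥ 1 and let c ∈ I^q be such that π_i(c) ∈ I_i^{q+1} for every i = 1, …, m. Then there exists c' ∈ I^q with c − c' ∈ I^{q+1} and π_i(c') = 0 for every i = 1, …, m. (This is the key lifting property establishing the conditions s_{n,q} for the complex A_*(X_Δ(ℝ)) computing the Borel–Moore homology with ℤ/2ℤ coefficients of a real toric variety, where 𝔽₂[V] is the summand A_{σ} for the zero cone and the v_i are the mod-2 reductions of the primitive generators of the rays of the fan Δ.) -/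

import Mathlib

open AddMonoidAlgebra

/-- The canonical basis element `[v]` of the group algebra `𝔽₂[V]` of the additive group `V`. -/
noncomputable def ga {V : Type*} [AddCommMonoid V] (v : V) :
    AddMonoidAlgebra (ZMod 2) V :=
  AddMonoidAlgebra.single v 1

/-- The fundamental class `[H] = ∑_{v ∈ H} [v] ∈ 𝔽₂[V]` of a linear subspace `H ⊆ V`. -/
noncomputable def fundClass {V : Type*} [AddCommGroup V] [Module (ZMod 2) V]
    (H : Submodule (ZMod 2) V) : AddMonoidAlgebra (ZMod 2) V :=
  ∑ᶠ v ∈ (H : Set V), ga v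

/-- The augmentation map `μ : 𝔽₂[V] → 𝔽₂`, sending each `[v]` to `1`. -/
noncomputable def aug (V : Type*) [AddCommMonoid V] :
    AddMonoidAlgebra (ZMod 2) V →ₐ[ZMod 2] ZMod 2 :=
  AddMonoidAlgebra.lift (ZMod 2) (ZMod 2) V 1

/-- The augmentation ideal `I ⊆ 𝔽₂[V]`, i.e. the kernel of the augmentation map. -/
noncomputable def augIdeal (V : Type*) [AddCommMonoid V] :
    Ideal (AddMonoidAlgebra (ZMod 2) V) :=
  RingHom.ker (aug V).toRingHom

set_option linter.unusedSectionVars false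
set_option linter.unusedVariables false
set_option linter.unnecessarySimpa false
set_option linter.unreachableTactic false
set_option linter.unusedTactic false
set_option maxHeartbeats 1000000

namespace Snq

universe u

section Basic

variable {V : Type u} [AddCommGroup V] [Module (ZMod 2) V]

lemma char2_add_self {M : Type*} [AddCommMonoid M] [Module (ZMod 2) M] (c : M) : c + c = 0 := by
  have h2 : (2 : ZMod 2) = 0 := by decide
  have : (2 : ZMod 2) • c = 0 := by rw [h2, zero_smul]
  rwa [two_smul] at this

lemma char2_neg {M : Type*} [AddCommGroup M] [Module (ZMod 2) M] (c : M) : -c = c :=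
  neg_eq_of_add_eq_zero_right (char2_add_self c)

lemma char2_sub {M : Type*} [AddCommGroup M] [Module (ZMod 2) M] (a b : M) : a - b = a + b := by
  rw [sub_eq_add_neg, char2_neg]

noncomputable def xel (v : V) : AddMonoidAlgebra (ZMod 2) V := 1 + ga v

lemma ga_zero : ga (0 : V) = 1 := by
  rw [ga, AddMonoidAlgebra.one_def]

lemma ga_mul (v w : V) : ga v * ga w = ga (v + w) := by
  simp [ga, AddMonoidAlgebra.single_mul_single]

lemma xel_zero : xel (0 : V) = 0 := by
  rw [xel, ga_zero]; exact char2_add_self 1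

lemma xel_mul_self (v : V) : xel v * xel v = 0 := by
  have h1 : ga v * ga v = 1 := by rw [ga_mul, char2_add_self, ga_zero]
  have : xel v * xel v = 1 + ga v * ga v + (ga v + ga v) := by rw [xel]; ring
  rw [this, h1, char2_add_self, zero_add, char2_add_self]

lemma xel_mul_xel (a b : V) : xel a * xel b = xel (a + b) * xel a := by
  have h1 : ga (a + b) * ga a = ga b := by
    rw [ga_mul]
    congr 1
    abel_nf
    rw [show (2 : ℤ) • a = a + a by rw [two_smul], char2_add_self, zero_add]
  have e1 : xel a * xel b = 1 + ga a + ga b + ga a * ga b := by rw [xel, xel]; ring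
  have e2 : xel (a + b) * xel a = 1 + ga a + ga (a + b) + ga (a + b) * ga a := by
    rw [xel, xel]; ring
  rw [e1, e2, h1, ga_mul]
  ring

lemma mem_augIdeal_iff {c : AddMonoidAlgebra (ZMod 2) V} :
    c ∈ augIdeal V ↔ aug V c = 0 := RingHom.mem_ker

lemma aug_ga (v : V) : aug V (ga v) = 1 := by
  simp [aug, ga, AddMonoidAlgebra.lift_single]

lemma xel_mem_augIdeal (v : V) : xel v ∈ augIdeal V := by
  rw [mem_augIdeal_iff, xel, map_add, map_one, aug_ga]
  decide

lemma aug_sum_coeffs (c : AddMonoidAlgebra (ZMod 2) V) :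
    aug V c = c.coeff.sum fun _ b => b := by
  simp [aug, AddMonoidAlgebra.lift_apply]

end Basic

section Part2
variable {V : Type u} [AddCommGroup V] [Module (ZMod 2) V]

lemma mem_span_xel {c : AddMonoidAlgebra (ZMod 2) V} (hc : c ∈ augIdeal V) :
    c ∈ Submodule.span (ZMod 2) (Set.range (xel : V → AddMonoidAlgebra (ZMod 2) V)) := by
  classical
  have h0 : (c.coeff.sum fun _ b => b) = 0 := by
    rw [← aug_sum_coeffs]; exact mem_augIdeal_iff.mp hc
  have hdecomp : c = c.coeff.sum fun v a => a • xel v := by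
    have e1 : (c.coeff.sum fun v a => a • xel v)
        = (c.coeff.sum fun v a => a • (1 : AddMonoidAlgebra (ZMod 2) V)) + c.coeff.sum fun v a => a • ga v := by
      rw [← Finsupp.sum_add]
      congr 1; funext v a
      rw [xel, smul_add]
    have e2 : (c.coeff.sum fun v a => a • ga v) = c := by
      conv_rhs => rw [← AddMonoidAlgebra.sum_coeff_single c]
      congr 1; funext v a
      rw [ga, AddMonoidAlgebra.smul_single', mul_one]
    have e3 : (c.coeff.sum fun v a => a • (1 : AddMonoidAlgebra (ZMod 2) V))
        = (c.coeff.sum fun _ b => b) • (1 : AddMonoidAlgebra (ZMod 2) V) := by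
      rw [Finsupp.sum, Finsupp.sum, Finset.sum_smul]
    rw [e1, e2, e3, h0, zero_smul, zero_add]
  rw [hdecomp]
  refine Submodule.sum_mem _ fun v _ => Submodule.smul_mem _ _ ?_
  exact Submodule.subset_span ⟨v, rfl⟩

lemma augIdeal_eq_span :
    augIdeal V = Ideal.span (Set.range (xel : V → AddMonoidAlgebra (ZMod 2) V)) := by
  apply le_antisymm
  · intro c hc
    have h1 : Submodule.span (ZMod 2) (Set.range (xel : V → AddMonoidAlgebra (ZMod 2) V))
        ≤ (Ideal.span (Set.range (xel : V → AddMonoidAlgebra (ZMod 2) V))).restrictScalars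
            (ZMod 2) :=
      Submodule.span_le.mpr fun x hx => Ideal.subset_span hx
    exact h1 (mem_span_xel hc)
  · rw [Ideal.span_le]
    rintro _ ⟨v, rfl⟩
    exact xel_mem_augIdeal v

variable {W : Type u} [AddCommGroup W] [Module (ZMod 2) W]

noncomputable abbrev emap (f : V →ₗ[ZMod 2] W) :
    AddMonoidAlgebra (ZMod 2) V →ₐ[ZMod 2] AddMonoidAlgebra (ZMod 2) W :=
  AddMonoidAlgebra.mapDomainAlgHom (ZMod 2) (ZMod 2) f

lemma emap_ga (f : V →ₗ[ZMod 2] W) (v : V) : emap f (ga v) = ga (f v) := by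
  simp [emap, ga]

lemma emap_xel (f : V →ₗ[ZMod 2] W) (v : V) : emap f (xel v) = xel (f v) := by
  rw [xel, map_add, map_one, emap_ga, xel]

lemma aug_emap (f : V →ₗ[ZMod 2] W) (c : AddMonoidAlgebra (ZMod 2) V) :
    aug W (emap f c) = aug V c := by
  have h : (aug W).comp (emap f) = aug V := by
    apply AddMonoidAlgebra.algHom_ext
    intro v
    show aug W (emap f (ga v)) = aug V (ga v)
    rw [emap_ga, aug_ga, aug_ga]
    exact Subsingleton.elim _ _
  calc aug W (emap f c) = ((aug W).comp (emap f)) c := rfl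
  _ = aug V c := by rw [h]

lemma emap_mem_augIdeal (f : V →ₗ[ZMod 2] W) {c : AddMonoidAlgebra (ZMod 2) V}
    (hc : c ∈ augIdeal V) : emap f c ∈ augIdeal W := by
  rw [mem_augIdeal_iff, aug_emap]
  exact mem_augIdeal_iff.mp hc

lemma emap_mem_pow (f : V →ₗ[ZMod 2] W) {n : ℕ} {c : AddMonoidAlgebra (ZMod 2) V}
    (hc : c ∈ augIdeal V ^ n) : emap f c ∈ augIdeal W ^ n := by
  have h1 : Ideal.map (emap f) (augIdeal V) ≤ augIdeal W := by
    rw [Ideal.map_le_iff_le_comap]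
    intro x hx
    rw [Ideal.mem_comap]
    exact emap_mem_augIdeal f hx
  have h2 : Ideal.map (emap f) (augIdeal V ^ n) ≤ augIdeal W ^ n := by
    rw [Ideal.map_pow]
    exact Ideal.pow_right_mono h1 n
  exact h2 (Ideal.mem_map_of_mem _ hc)

lemma emap_surjective (f : V →ₗ[ZMod 2] W) (hf : Function.Surjective f) :
    Function.Surjective (emap f) := by
  intro y
  refine ⟨AddMonoidAlgebra.mapDomain (Function.surjInv hf) y, ?_⟩
  show AddMonoidAlgebra.mapDomain (⇑f) _ = y
  apply AddMonoidAlgebra.coeff_injective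
  simp only [AddMonoidAlgebra.coeff_mapDomain]
  rw [← Finsupp.mapDomain_comp]
  have : ⇑f ∘ Function.surjInv hf = id := funext fun x => Function.surjInv_eq hf x
  rw [this, Finsupp.mapDomain_id]

lemma emap_augIdeal (f : V →ₗ[ZMod 2] W) (hf : Function.Surjective f) :
    Ideal.map (emap f) (augIdeal V) = augIdeal W := by
  rw [augIdeal_eq_span, augIdeal_eq_span, Ideal.map_span]
  congr 1
  rw [← Set.range_comp]
  have h1 : (⇑(emap f)) ∘ (xel : V → _) = (xel : W → _) ∘ ⇑f := funext fun v => emap_xel f v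
  rw [h1, Set.range_comp, Set.range_eq_univ.mpr hf, Set.image_univ]

lemma exists_emap_pow_preimage (f : V →ₗ[ZMod 2] W) (hf : Function.Surjective f) {n : ℕ}
    {y : AddMonoidAlgebra (ZMod 2) W} (hy : y ∈ augIdeal W ^ n) :
    ∃ x ∈ augIdeal V ^ n, emap f x = y := by
  have h1 : augIdeal W ^ n = Ideal.map (emap f) (augIdeal V ^ n) := by
    rw [Ideal.map_pow, emap_augIdeal f hf]
  rw [h1, Ideal.mem_map_iff_of_surjective _ (emap_surjective f hf)] at hy
  exact hy
end Part2


section Part3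
variable {V : Type u} [AddCommGroup V] [Module (ZMod 2) V]

lemma zmod2_cases (a : ZMod 2) : a = 0 ∨ a = 1 := by revert a; decide
lemma zmod2_add_eq_zero {a b : ZMod 2} (h : a + b = 0) : b = a := by revert h; revert a b; decide

-- basic coefficient lemmas
lemma coeff_add (a b : AddMonoidAlgebra (ZMod 2) V) (u : V) : (a + b).coeff u = a.coeff u + b.coeff u := rfl

lemma coeff_ga_mul (c : AddMonoidAlgebra (ZMod 2) V) (w u : V) :
    (ga w * c).coeff u = c.coeff (w + u) := by
  rw [ga, AddMonoidAlgebra.coeff_single_mul_apply, one_mul, char2_neg]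

lemma coeff_xel_mul (c : AddMonoidAlgebra (ZMod 2) V) (w u : V) :
    (xel w * c).coeff u = c.coeff u + c.coeff (w + u) := by
  rw [xel, add_mul, one_mul, coeff_add, coeff_ga_mul]

section quotient

variable (w : V)

abbrev spw (w : V) : Submodule (ZMod 2) V := Submodule.span (ZMod 2) ({w} : Set V)



lemma mem_span_w {x : V} : x ∈ (spw w) ↔ x = 0 ∨ x = w := by
  rw [Submodule.mem_span_singleton]
  constructor
  · rintro ⟨a, rfl⟩
    rcases zmod2_cases a with h | h <;> subst h
    · left; rw [zero_smul]
    · right; rw [one_smul]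
  · rintro (rfl | rfl)
    · exact ⟨0, by rw [zero_smul]⟩
    · exact ⟨1, by rw [one_smul]⟩

lemma mkQ_eq_iff (hw : w ≠ 0) (a u : V) :
    (spw w).mkQ a = (spw w).mkQ u ↔ a = u ∨ a = w + u := by
  rw [Submodule.mkQ_apply, Submodule.mkQ_apply, Submodule.Quotient.eq, mem_span_w]
  constructor
  · rintro (h | h)
    · left; exact sub_eq_zero.mp h
    · right; rw [sub_eq_iff_eq_add'] at h; rw [h, add_comm]
  · rintro (rfl | rfl)
    · left; exact sub_self a
    · right; rw [char2_sub, add_assoc, char2_add_self, add_zero]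

lemma coeff_of_ker (hw : w ≠ 0) {c : AddMonoidAlgebra (ZMod 2) V}
    (hc : emap (spw w).mkQ c = 0) (u : V) : c.coeff (w + u) = c.coeff u := by
  classical
  have h0 : (Finsupp.mapDomain ((spw w).mkQ) c.coeff) ((spw w).mkQ u) = 0 := by
    have : (emap (spw w).mkQ c).coeff = Finsupp.mapDomain ((spw w).mkQ) c.coeff := rfl
    rw [← this, hc]; rfl
  rw [Finsupp.mapDomain, Finsupp.sum_apply] at h0
  have h1 : ∀ a, (Finsupp.single ((spw w).mkQ a) (c.coeff a)) ((spw w).mkQ u)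
      = (if a = u then c.coeff a else 0) + (if a = w + u then c.coeff a else 0) := by
    intro a
    rw [Finsupp.single_apply]
    have hwu : ¬ u = w + u := fun hc' => hw (right_eq_add.mp hc')
    by_cases h : (spw w).mkQ a = (spw w).mkQ u
    · rw [if_pos h]
      rcases (mkQ_eq_iff w hw a u).mp h with rfl | rfl
      · rw [if_pos rfl, if_neg hwu, add_zero]
      · rw [if_neg (fun hc' => hwu hc'.symm), if_pos rfl, zero_add]
    · have h2 : ¬ a = u := fun hc' => h (by rw [hc'])
      have h3 : ¬ a = w + u := fun hc' => h (by
        rw [hc']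
        exact (mkQ_eq_iff w hw (w + u) u).mpr (Or.inr rfl))
      rw [if_neg h, if_neg h2, if_neg h3, add_zero]
  rw [Finsupp.sum] at h0
  have h4 : ∑ a ∈ c.coeff.support, ((if a = u then c.coeff a else 0) + (if a = w + u then c.coeff a else 0)) = 0 := by
    rw [← Finset.sum_congr rfl (fun a _ => h1 a)]
    exact h0
  rw [Finset.sum_add_distrib, Finset.sum_ite_eq' c.coeff.support u (fun a => c.coeff a),
      Finset.sum_ite_eq' c.coeff.support (w + u) (fun a => c.coeff a)] at h4
  have h5 : ∀ x : V, (if x ∈ c.coeff.support then c.coeff x else 0) = c.coeff x := by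
    intro x
    by_cases hx : x ∈ c.coeff.support
    · rw [if_pos hx]
    · rw [if_neg hx]
      exact (Finsupp.notMem_support_iff.mp hx).symm
  rw [h5, h5] at h4
  exact zmod2_add_eq_zero h4


lemma eq_xel_mul (hw : w ≠ 0) {c : AddMonoidAlgebra (ZMod 2) V}
    (hcc : ∀ u, c.coeff (w + u) = c.coeff u) : ∃ d, c = xel w * d := by
  classical
  obtain ⟨U, hU⟩ := Submodule.exists_isCompl (spw w)
  have hwP : w ∈ spw w := Submodule.mem_span_singleton_self w
  have hwU : w ∉ U := by
    intro hmem
    exact hw (Submodule.disjoint_def.mp hU.disjoint w hwP hmem)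
  set d := AddMonoidAlgebra.ofCoeff (c.coeff.filter (fun u => u ∈ U)) with hd
  refine ⟨d, ?_⟩
  ext u
  rw [coeff_xel_mul]
  have hdapp : ∀ x, d.coeff x = if x ∈ U then c.coeff x else 0 := by
    intro x; rw [hd]; exact Finsupp.filter_apply _ _ _
  by_cases hu : u ∈ U
  · have h1 : w + u ∉ U := by
      intro hmem
      exact hwU (by
        have : w + u - u ∈ U := Submodule.sub_mem U hmem hu
        rwa [add_sub_cancel_right] at this)
    rw [hdapp, hdapp, if_pos hu, if_neg h1, add_zero]
  · have h1 : w + u ∈ U := by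
      have htop : u ∈ (spw w) ⊔ U := by rw [hU.sup_eq_top]; exact Submodule.mem_top
      rcases Submodule.mem_sup.mp htop with ⟨p, hp, y, hy, hpy⟩
      rcases (mem_span_w w).mp hp with h0 | h0
      · exfalso; apply hu; rw [← hpy, h0, zero_add]; exact hy
      · have : w + u = y := by rw [← hpy, h0, ← add_assoc, char2_add_self, zero_add]
        rwa [this]
    rw [hdapp, hdapp, if_neg hu, if_pos h1, zero_add, hcc]

lemma xel_mul_eq_zero_coeff {c : AddMonoidAlgebra (ZMod 2) V}
    (h : xel w * c = 0) (u : V) : c.coeff (w + u) = c.coeff u := by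
  have h0 : (xel w * c).coeff u = 0 := by rw [h]; rfl
  rw [coeff_xel_mul] at h0
  exact zmod2_add_eq_zero h0

lemma ker_emap_iff (hw : w ≠ 0) {c : AddMonoidAlgebra (ZMod 2) V} :
    emap (spw w).mkQ c = 0 ↔ ∃ d, c = xel w * d := by
  constructor
  · intro hc
    exact eq_xel_mul w hw (coeff_of_ker w hw hc)
  · rintro ⟨d, rfl⟩
    rw [map_mul, emap_xel]
    have : (spw w).mkQ w = 0 := by
      rw [Submodule.mkQ_apply, Submodule.Quotient.mk_eq_zero]
      exact Submodule.mem_span_singleton_self w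
    rw [this, xel_zero, zero_mul]

lemma ann_xel_iff (hw : w ≠ 0) {c : AddMonoidAlgebra (ZMod 2) V} :
    xel w * c = 0 ↔ ∃ d, c = xel w * d := by
  constructor
  · intro h
    exact eq_xel_mul w hw (xel_mul_eq_zero_coeff w h)
  · rintro ⟨d, rfl⟩
    rw [← mul_assoc, xel_mul_self, zero_mul]

end quotient

lemma exists_compl_ge {P W' : Submodule (ZMod 2) V} (h : Disjoint P W') :
    ∃ U, W' ≤ U ∧ IsCompl P U := by
  obtain ⟨C, hC⟩ := Submodule.exists_isCompl (P ⊔ W')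
  refine ⟨W' ⊔ C, le_sup_left, ?_, ?_⟩
  · -- disjoint
    rw [Submodule.disjoint_def]
    intro x hxP hxWC
    rcases Submodule.mem_sup.mp hxWC with ⟨y, hy, z, hz, hyz⟩
    have hzPW : z ∈ P ⊔ W' := by
      have : z = x - y := by rw [← hyz]; abel
      rw [this]
      exact Submodule.sub_mem _ (le_sup_left (α := Submodule (ZMod 2) V) hxP)
        (le_sup_right (α := Submodule (ZMod 2) V) hy)
    have hz0 : z = 0 := Submodule.disjoint_def.mp hC.disjoint z hzPW hz
    have hxW : x ∈ W' := by
      rw [← hyz, hz0, add_zero]; exact hy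
    exact Submodule.disjoint_def.mp h x hxP hxW
  · -- codisjoint
    rw [codisjoint_iff]
    rw [← sup_assoc]
    exact codisjoint_iff.mp hC.codisjoint


lemma emap_emap_of_section {W : Type u} [AddCommGroup W] [Module (ZMod 2) W]
    (f : V →ₗ[ZMod 2] W) (g : W →ₗ[ZMod 2] V) (hfg : ∀ x, f (g x) = x)
    (c : AddMonoidAlgebra (ZMod 2) W) : emap f (emap g c) = c := by
  simp only [emap, AddMonoidAlgebra.mapDomainAlgHom_apply]
  apply AddMonoidAlgebra.coeff_injective
  simp only [AddMonoidAlgebra.coeff_mapDomain]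
  rw [← Finsupp.mapDomain_comp]
  have h : ⇑(f : V →+ W) ∘ ⇑(g : W →+ V) = id := funext hfg
  rw [h, Finsupp.mapDomain_id]

section pack

variable (w : V) (U : Submodule (ZMod 2) V) (hU : IsCompl (spw w) U)

noncomputable def sig : (V ⧸ spw w) →ₗ[ZMod 2] V :=
  U.subtype.comp (Submodule.quotientEquivOfIsCompl (spw w) U hU).toLinearMap

lemma sig_mem (x : V ⧸ spw w) : sig w U hU x ∈ U :=
  ((Submodule.quotientEquivOfIsCompl (spw w) U hU) x).2

lemma mkQ_sig (x : V ⧸ spw w) : (spw w).mkQ (sig w U hU x) = x := by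
  have h := Submodule.mk_quotientEquivOfIsCompl_apply hU x
  rw [Submodule.mkQ_apply]
  exact h

lemma sig_mkQ_of_mem {u : V} (hu : u ∈ U) : sig w U hU ((spw w).mkQ u) = u := by
  have h := Submodule.quotientEquivOfIsCompl_apply_mk_coe hU (⟨u, hu⟩ : U)
  show ((Submodule.quotientEquivOfIsCompl (spw w) U hU) ((spw w).mkQ u) : V) = u
  rw [Submodule.mkQ_apply]
  rw [h]

lemma pi_s (c : AddMonoidAlgebra (ZMod 2) (V ⧸ spw w)) :
    emap ((spw w).mkQ) (emap (sig w U hU) c) = c :=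
  emap_emap_of_section _ _ (mkQ_sig w U hU) c

lemma s_xel (x : V ⧸ spw w) : emap (sig w U hU) (xel x) = xel (sig w U hU x) :=
  emap_xel _ _

-- existence of decomposition
lemma exists_decomp (hw : w ≠ 0) (c : AddMonoidAlgebra (ZMod 2) V) :
    ∃ t, c = emap (sig w U hU) (emap ((spw w).mkQ) c) + xel w * emap (sig w U hU) t := by
  have h1 : emap ((spw w).mkQ) (c - emap (sig w U hU) (emap ((spw w).mkQ) c)) = 0 := by
    rw [map_sub, pi_s, sub_self]
  obtain ⟨d, hd⟩ := (ker_emap_iff w hw).mp h1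
  have h2 : emap ((spw w).mkQ) (d - emap (sig w U hU) (emap ((spw w).mkQ) d)) = 0 := by
    rw [map_sub, pi_s, sub_self]
  obtain ⟨d', hd'⟩ := (ker_emap_iff w hw).mp h2
  refine ⟨emap ((spw w).mkQ) d, ?_⟩
  have h3 : xel w * d = xel w * emap (sig w U hU) (emap ((spw w).mkQ) d) := by
    have h4 : xel w * (d - emap (sig w U hU) (emap ((spw w).mkQ) d)) = 0 := by
      rw [hd', ← mul_assoc, xel_mul_self, zero_mul]
    rw [mul_sub] at h4
    rw [← sub_eq_zero]
    exact h4
  rw [← h3, ← hd]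
  abel

-- injectivity on the x-part
lemma xel_s_eq_zero (hw : w ≠ 0) {t : AddMonoidAlgebra (ZMod 2) (V ⧸ spw w)}
    (h : xel w * emap (sig w U hU) t = 0) : t = 0 := by
  classical
  have hwU : w ∉ U := by
    intro hmem
    exact hw (Submodule.disjoint_def.mp hU.disjoint w
      (Submodule.mem_span_singleton_self w) hmem)
  have hcoeff := xel_mul_eq_zero_coeff w h
  have hsupp : (emap (sig w U hU) t).coeff.support ⊆ t.coeff.support.image (sig w U hU) := by
    simp only [emap, AddMonoidAlgebra.mapDomainAlgHom_apply, AddMonoidAlgebra.coeff_mapDomain]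
    exact Finsupp.mapDomain_support
  have hzero : emap (sig w U hU) t = 0 := by
    by_contra hne
    obtain ⟨u, hu⟩ := Finsupp.support_nonempty_iff (f := (emap (sig w U hU) t).coeff) |>.mpr (by rwa [Ne, AddMonoidAlgebra.coeff_eq_zero])
    have huU : u ∈ U := by
      rcases Finset.mem_image.mp (hsupp hu) with ⟨x, _, rfl⟩
      exact sig_mem w U hU x
    have hval : (emap (sig w U hU) t).coeff u ≠ 0 := Finsupp.mem_support_iff.mp hu
    have hwuU : w + u ∈ U := by
      have hval2 : (emap (sig w U hU) t).coeff (w + u) ≠ 0 := by rw [hcoeff]; exact hval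
      have hu2 : w + u ∈ (emap (sig w U hU) t).coeff.support := Finsupp.mem_support_iff.mpr hval2
      rcases Finset.mem_image.mp (hsupp hu2) with ⟨x, _, hx⟩
      rw [← hx]
      exact sig_mem w U hU x
    apply hwU
    have : w + u - u ∈ U := Submodule.sub_mem U hwuU huU
    rwa [add_sub_cancel_right] at this
  have : t = emap ((spw w).mkQ) (emap (sig w U hU) t) := (pi_s w U hU t).symm
  rw [this, hzero, map_zero]

-- main decomposition of powers of the augmentation ideal
lemma decomp_pow (hw : w ≠ 0) (n : ℕ) (c : AddMonoidAlgebra (ZMod 2) V)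
    (hc : c ∈ augIdeal V ^ n) :
    ∃ g ∈ augIdeal (V ⧸ spw w) ^ n, ∃ t ∈ augIdeal (V ⧸ spw w) ^ (n - 1),
      c = emap (sig w U hU) g + xel w * emap (sig w U hU) t := by
  induction n generalizing c with
  | zero =>
    obtain ⟨t, ht⟩ := exists_decomp w U hU hw c
    exact ⟨emap ((spw w).mkQ) c, by simp, t, by simp, ht⟩
  | succ n ih =>
    rw [pow_succ] at hc
    refine Submodule.mul_induction_on hc (fun a ha b hb => ?_) (fun x y ihx ihy => ?_)
    · obtain ⟨g, hg, t, ht, hab⟩ := ih a ha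
      obtain ⟨t', habt'⟩ := exists_decomp w U hU hw b
      set g' := emap ((spw w).mkQ) b with hg'def
      have hg' : g' ∈ augIdeal (V ⧸ spw w) := emap_mem_augIdeal _ hb
      have hexp : a * b = emap (sig w U hU) (g * g')
          + xel w * emap (sig w U hU) (g * t' + t * g') := by
        have hm1 : emap (sig w U hU) (g * g')
            = emap (sig w U hU) g * emap (sig w U hU) g' := map_mul _ _ _
        have hm2 : emap (sig w U hU) (g * t' + t * g')
            = emap (sig w U hU) g * emap (sig w U hU) t'
              + emap (sig w U hU) t * emap (sig w U hU) g' := by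
          rw [map_add, map_mul, map_mul]
        rw [hab, habt', hm1, hm2]
        have hxx : xel w * xel w = 0 := xel_mul_self w
        generalize emap (sig w U hU) g = A at *
        generalize emap (sig w U hU) g' = B at *
        generalize emap (sig w U hU) t = C at *
        generalize emap (sig w U hU) t' = D at *
        have : (A + xel w * C) * (B + xel w * D)
            = A * B + xel w * (A * D + C * B) + (xel w * xel w) * (C * D) := by ring
        rw [this, hxx, zero_mul, add_zero]
      refine ⟨g * g', ?_, g * t' + t * g', ?_, hexp⟩
      · rw [pow_succ]
        exact Ideal.mul_mem_mul hg hg'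
      · have h1 : g * t' ∈ augIdeal (V ⧸ spw w) ^ (n + 1 - 1) := by
          simpa using Ideal.mul_mem_right t' _ hg
        have h2 : t * g' ∈ augIdeal (V ⧸ spw w) ^ (n + 1 - 1) := by
          simp only [Nat.add_sub_cancel]
          cases n with
          | zero => simpa using Ideal.mul_mem_right g' _ (by simpa using ht)
          | succ m =>
            rw [pow_succ]
            exact Ideal.mul_mem_mul (by simpa using ht) hg'
        exact Ideal.add_mem _ h1 h2
    · obtain ⟨g1, hg1, t1, ht1, e1⟩ := ihx
      obtain ⟨g2, hg2, t2, ht2, e2⟩ := ihy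
      refine ⟨g1 + g2, Ideal.add_mem _ hg1 hg2, t1 + t2, Ideal.add_mem _ ht1 ht2, ?_⟩
      rw [e1, e2, map_add, map_add, mul_add]
      abel

end pack
end Part3


section Part4
variable {V : Type u} [AddCommGroup V] [Module (ZMod 2) V]


lemma mkQ_self (w : V) : (spw w).mkQ w = 0 := by
  rw [Submodule.mkQ_apply, Submodule.Quotient.mk_eq_zero]
  exact Submodule.mem_span_singleton_self w

lemma init_snoc_li {k : ℕ} {w : Fin (k+1) → V} (hw : LinearIndependent (ZMod 2) w) :
    LinearIndependent (ZMod 2) (Fin.init w)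
      ∧ w (Fin.last k) ∉ Submodule.span (ZMod 2) (Set.range (Fin.init w)) := by
  have h : LinearIndependent (ZMod 2) (Fin.snoc (Fin.init w) (w (Fin.last k)) : Fin (k+1) → V) := by
    rwa [Fin.snoc_init_self]
  exact linearIndependent_fin_snoc.mp h

lemma map_init_li {k : ℕ} {w : Fin (k+1) → V} (hw : LinearIndependent (ZMod 2) w) :
    LinearIndependent (ZMod 2)
      (fun j : Fin k => (spw (w (Fin.last k))).mkQ (w j.castSucc)) := by
  obtain ⟨h1, h2⟩ := init_snoc_li hw
  have hd : Disjoint (Submodule.span (ZMod 2) (Set.range (Fin.init w)))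
      (LinearMap.ker (spw (w (Fin.last k))).mkQ) := by
    rw [Submodule.ker_mkQ]
    exact (Submodule.disjoint_span_singleton' (hw.ne_zero (Fin.last k))).mpr h2
  exact h1.map hd

lemma prod_xel_mem_pow {k : ℕ} (w : Fin k → V) : (∏ j, xel (w j)) ∈ augIdeal V ^ k := by
  have h := Ideal.prod_mem_prod (s := (Finset.univ : Finset (Fin k)))
      (I := fun _ : Fin k => augIdeal V) (x := fun j => xel (w j))
      (fun j _ => xel_mem_augIdeal (w j))
  rwa [Finset.prod_const, Finset.card_univ, Fintype.card_fin] at h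

lemma ann_prod_xel (k : ℕ) : ∀ {V : Type u} [AddCommGroup V] [Module (ZMod 2) V]
    (w : Fin k → V), LinearIndependent (ZMod 2) w → ∀ (a : AddMonoidAlgebra (ZMod 2) V),
    (∏ j, xel (w j)) * a = 0 →
    a ∈ Ideal.span (Set.range fun j => xel (w j)) := by
  induction k with
  | zero =>
    intro V _ _ w hw a ha
    rw [show (∏ j : Fin 0, xel (w j)) = 1 from by simp, one_mul] at ha
    rw [ha]; exact Ideal.zero_mem _
  | succ k ih =>
    intro V _ _ w hw a ha
    have hwl : w (Fin.last k) ≠ 0 := hw.ne_zero _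
    have hrot : xel (w (Fin.last k)) * ((∏ j : Fin k, xel (w j.castSucc)) * a) = 0 := by
      rw [← ha, Fin.prod_univ_castSucc]
      ring
    obtain ⟨d0, hd0⟩ := (ann_xel_iff (w (Fin.last k)) hwl).mp hrot
    have hker : emap (spw (w (Fin.last k))).mkQ ((∏ j : Fin k, xel (w j.castSucc)) * a) = 0 := by
      rw [hd0, map_mul, emap_xel, mkQ_self, xel_zero, zero_mul]
    have hq : (∏ j : Fin k, xel ((spw (w (Fin.last k))).mkQ (w j.castSucc)))
        * emap (spw (w (Fin.last k))).mkQ a = 0 := by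
      have h2 : emap (spw (w (Fin.last k))).mkQ (∏ j : Fin k, xel (w j.castSucc))
          = ∏ j : Fin k, xel ((spw (w (Fin.last k))).mkQ (w j.castSucc)) := by
        rw [map_prod]
        exact Finset.prod_congr rfl fun j _ => emap_xel _ _
      rw [← h2, ← map_mul, hker]
    have hIH := ih _ (map_init_li hw) _ hq
    rw [Ideal.mem_span_range_iff_exists_fun] at hIH
    obtain ⟨cq, hcq⟩ := hIH
    have hsurj : Function.Surjective ((spw (w (Fin.last k))).mkQ) :=
      Submodule.mkQ_surjective _
    have hch : ∀ j : Fin k, ∃ x, emap (spw (w (Fin.last k))).mkQ x = cq j := by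
      intro j
      obtain ⟨x, _, hx⟩ := exists_emap_pow_preimage (spw (w (Fin.last k))).mkQ hsurj
        (n := 0) (y := cq j) (by simp)
      exact ⟨x, hx⟩
    choose e he using hch
    have hker2 : emap (spw (w (Fin.last k))).mkQ
        (a - ∑ j : Fin k, e j * xel (w j.castSucc)) = 0 := by
      rw [map_sub, map_sum]
      have h2 : ∀ j : Fin k, emap (spw (w (Fin.last k))).mkQ (e j * xel (w j.castSucc))
          = cq j * xel ((spw (w (Fin.last k))).mkQ (w j.castSucc)) := by
        intro j
        rw [map_mul, he, emap_xel]
      rw [Finset.sum_congr rfl fun j _ => h2 j, hcq]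
      exact sub_self _
    obtain ⟨d, hd⟩ := (ker_emap_iff _ hwl).mp hker2
    have hdec : a = (∑ j : Fin k, e j * xel (w j.castSucc)) + xel (w (Fin.last k)) * d := by
      rw [← hd]; abel
    rw [hdec]
    apply Ideal.add_mem
    · apply Ideal.sum_mem
      intro j _
      exact Ideal.mul_mem_left _ _ (Ideal.subset_span ⟨j.castSucc, rfl⟩)
    · exact Ideal.mul_mem_right _ _ (Ideal.subset_span ⟨Fin.last k, rfl⟩)

lemma L3 (k : ℕ) : ∀ {V : Type u} [AddCommGroup V] [Module (ZMod 2) V]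
    (w : Fin k → V), LinearIndependent (ZMod 2) w →
    ∀ (n : ℕ) (a : AddMonoidAlgebra (ZMod 2) V),
    (∏ j, xel (w j)) * a ∈ augIdeal V ^ n →
    ∃ b ∈ augIdeal V ^ (n - k), (∏ j, xel (w j)) * a = (∏ j, xel (w j)) * b := by
  induction k with
  | zero =>
    intro V _ _ w hw n a ha
    refine ⟨(∏ j : Fin 0, xel (w j)) * a, by simpa using ha, by simp⟩
  | succ k ih =>
    intro V _ _ w hw n a ha
    have hwl : w (Fin.last k) ≠ 0 := hw.ne_zero _
    obtain ⟨h1, h2⟩ := init_snoc_li hw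
    have hd : Disjoint (spw (w (Fin.last k)))
        (Submodule.span (ZMod 2) (Set.range (Fin.init w))) :=
      ((Submodule.disjoint_span_singleton' hwl).mpr h2).symm
    obtain ⟨U, hWU, hU⟩ := exists_compl_ge hd
    have hsP : emap (sig (w (Fin.last k)) U hU)
        (∏ j : Fin k, xel ((spw (w (Fin.last k))).mkQ (w j.castSucc)))
        = ∏ j : Fin k, xel (w j.castSucc) := by
      rw [map_prod]
      refine Finset.prod_congr rfl fun j _ => ?_
      rw [emap_xel]
      congr 1
      exact sig_mkQ_of_mem _ U hU (hWU (Submodule.subset_span ⟨j, rfl⟩))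
    obtain ⟨t0, ht0⟩ := exists_decomp (w (Fin.last k)) U hU hwl a
    have key0 : (∏ j : Fin (k+1), xel (w j)) * a
        = xel (w (Fin.last k)) * emap (sig (w (Fin.last k)) U hU)
            ((∏ j : Fin k, xel ((spw (w (Fin.last k))).mkQ (w j.castSucc)))
              * emap (spw (w (Fin.last k))).mkQ a) := by
      rw [Fin.prod_univ_castSucc]
      conv_lhs => rw [ht0]
      rw [map_mul, hsP]
      have hxx := xel_mul_self (w (Fin.last k))
      linear_combination ((∏ j : Fin k, xel (w j.castSucc))
        * emap (sig (w (Fin.last k)) U hU) t0) * hxx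
    have hmem : xel (w (Fin.last k)) * emap (sig (w (Fin.last k)) U hU)
        ((∏ j : Fin k, xel ((spw (w (Fin.last k))).mkQ (w j.castSucc)))
          * emap (spw (w (Fin.last k))).mkQ a) ∈ augIdeal V ^ n := by
      rw [← key0]; exact ha
    obtain ⟨g, hg, t', ht', heq⟩ := decomp_pow (w (Fin.last k)) U hU hwl n _ hmem
    have hg0 : g = 0 := by
      have h5 := congrArg (emap (spw (w (Fin.last k))).mkQ) heq
      rw [map_mul, emap_xel, mkQ_self, xel_zero, zero_mul, map_add, map_mul, emap_xel,
          mkQ_self, xel_zero, zero_mul, add_zero, pi_s] at h5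
      exact h5.symm
    have hxst : xel (w (Fin.last k)) * emap (sig (w (Fin.last k)) U hU)
        ((∏ j : Fin k, xel ((spw (w (Fin.last k))).mkQ (w j.castSucc)))
          * emap (spw (w (Fin.last k))).mkQ a - t') = 0 := by
      rw [map_sub, mul_sub, heq, hg0, map_zero, zero_add, sub_self]
    have hPqa : (∏ j : Fin k, xel ((spw (w (Fin.last k))).mkQ (w j.castSucc)))
        * emap (spw (w (Fin.last k))).mkQ a = t' := by
      have h6 := xel_s_eq_zero (w (Fin.last k)) U hU hwl hxst
      exact sub_eq_zero.mp h6
    have hPq_mem : (∏ j : Fin k, xel ((spw (w (Fin.last k))).mkQ (w j.castSucc)))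
        * emap (spw (w (Fin.last k))).mkQ a ∈ augIdeal (V ⧸ spw (w (Fin.last k))) ^ (n - 1) := by
      rw [hPqa]; exact ht'
    obtain ⟨bq, hbq, hPqb⟩ := ih _ (map_init_li hw) (n-1)
      (emap (spw (w (Fin.last k))).mkQ a) hPq_mem
    refine ⟨emap (sig (w (Fin.last k)) U hU) bq, ?_, ?_⟩
    · have hnk : n - 1 - k = n - (k+1) := by omega
      rw [← hnk]
      exact emap_mem_pow _ hbq
    · rw [key0, hPqb, Fin.prod_univ_castSucc, map_mul, hsP]
      ring

lemma KL' (k : ℕ) {V : Type u} [AddCommGroup V] [Module (ZMod 2) V] :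
    ∀ (w : Fin k → V), LinearIndependent (ZMod 2) w →
    ∀ (q : ℕ) (c : AddMonoidAlgebra (ZMod 2) V),
    (∀ j, ∃ e, c - xel (w j) * e ∈ augIdeal V ^ (q+1)) →
    ∃ e, c - (∏ j, xel (w j)) * e ∈ augIdeal V ^ (q+1) := by
  induction k with
  | zero =>
    intro w hw q c hyp
    refine ⟨c, ?_⟩
    simp
  | succ k ih =>
    intro w hw q c hyp
    have hwl : w (Fin.last k) ≠ 0 := hw.ne_zero _
    obtain ⟨e, he⟩ := ih (Fin.init w) (init_snoc_li hw).1 q c (fun j => hyp j.castSucc)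
    obtain ⟨e', he'⟩ := hyp (Fin.last k)
    have hpc : emap (spw (w (Fin.last k))).mkQ c
        ∈ augIdeal (V ⧸ spw (w (Fin.last k))) ^ (q+1) := by
      have hmm := emap_mem_pow (spw (w (Fin.last k))).mkQ he'
      rw [map_sub, map_mul, emap_xel, mkQ_self, xel_zero, zero_mul, sub_zero] at hmm
      exact hmm
    have hprC : emap (spw (w (Fin.last k))).mkQ (∏ j : Fin k, xel (Fin.init w j))
        = ∏ j : Fin k, xel ((spw (w (Fin.last k))).mkQ (w j.castSucc)) := by
      rw [map_prod]
      exact Finset.prod_congr rfl fun j _ => emap_xel _ _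
    have hPe : (∏ j : Fin k, xel ((spw (w (Fin.last k))).mkQ (w j.castSucc)))
        * emap (spw (w (Fin.last k))).mkQ e
        ∈ augIdeal (V ⧸ spw (w (Fin.last k))) ^ (q+1) := by
      have hmm := emap_mem_pow (spw (w (Fin.last k))).mkQ he
      rw [map_sub, map_mul, hprC] at hmm
      have h7 := Ideal.sub_mem _ hpc hmm
      simpa using h7
    obtain ⟨bq, hbq, hPqb⟩ := L3 k _ (map_init_li hw) (q+1)
      (emap (spw (w (Fin.last k))).mkQ e) hPe
    obtain ⟨b0, hb0, hb0q⟩ := exists_emap_pow_preimage (spw (w (Fin.last k))).mkQ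
      (Submodule.mkQ_surjective _) hbq
    have hker : emap (spw (w (Fin.last k))).mkQ
        ((∏ j : Fin k, xel (Fin.init w j)) * (e - b0)) = 0 := by
      rw [map_mul, map_sub, hprC, hb0q, mul_sub, ← hPqb, sub_self]
    obtain ⟨d, hdq⟩ := (ker_emap_iff _ hwl).mp hker
    have hIP : (∏ i : Fin k, xel (w i.castSucc)) = ∏ j : Fin k, xel (Fin.init w j) := rfl
    have hann : (∏ j : Fin (k+1), xel (w j)) * (e - b0) = 0 := by
      rw [Fin.prod_univ_castSucc, hIP]
      have hstep : ((∏ j : Fin k, xel (Fin.init w j)) * xel (w (Fin.last k))) * (e - b0)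
          = xel (w (Fin.last k)) * ((∏ j : Fin k, xel (Fin.init w j)) * (e - b0)) := by ring
      rw [hstep, hdq, ← mul_assoc, xel_mul_self, zero_mul]
    have hmem := ann_prod_xel (k+1) w hw _ hann
    rw [Ideal.mem_span_range_iff_exists_fun] at hmem
    obtain ⟨t, ht⟩ := hmem
    have hPd : (∏ j : Fin k, xel (Fin.init w j)) * (e - b0)
        = ((∏ j : Fin k, xel (Fin.init w j)) * xel (w (Fin.last k))) * t (Fin.last k) := by
      rw [← ht, Finset.mul_sum, Fin.sum_univ_castSucc]
      have hz : ∀ j : Fin k, (∏ i : Fin k, xel (Fin.init w i))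
          * (t j.castSucc * xel (w j.castSucc)) = 0 := by
        intro j
        have h5 : (∏ i : Fin k, xel (Fin.init w i))
            = xel (w j.castSucc) * ∏ i ∈ Finset.univ.erase j, xel (Fin.init w i) :=
          (Finset.mul_prod_erase Finset.univ _ (Finset.mem_univ j)).symm
        rw [h5]
        have hxx := xel_mul_self (w j.castSucc)
        linear_combination ((∏ i ∈ Finset.univ.erase j, xel (Fin.init w i)) * t j.castSucc) * hxx
      rw [Finset.sum_congr rfl (fun j _ => hz j), Finset.sum_const_zero, zero_add]
      ring
    have h6 : (∏ j : Fin k, xel (Fin.init w j)) * e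
        = (∏ j : Fin k, xel (Fin.init w j)) * b0
          + ((∏ j : Fin k, xel (Fin.init w j)) * xel (w (Fin.last k))) * t (Fin.last k) := by
      rw [← hPd]; ring
    refine ⟨t (Fin.last k), ?_⟩
    have h7 : c - (∏ j : Fin (k+1), xel (w j)) * t (Fin.last k)
        = (c - (∏ j : Fin k, xel (Fin.init w j)) * e)
          + (∏ j : Fin k, xel (Fin.init w j)) * b0 := by
      rw [Fin.prod_univ_castSucc, hIP]
      linear_combination h6
    rw [h7]
    refine Ideal.add_mem _ he ?_
    have hPk : (∏ j : Fin k, xel (Fin.init w j)) ∈ augIdeal V ^ k :=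
      prod_xel_mem_pow (Fin.init w)
    have hmul : (∏ j : Fin k, xel (Fin.init w j)) * b0
        ∈ augIdeal V ^ k * augIdeal V ^ (q + 1 - k) := Ideal.mul_mem_mul hPk hb0
    rw [← pow_add] at hmul
    exact Ideal.pow_le_pow_right (by omega) hmul

end Part4


section Part5
variable {V : Type u} [AddCommGroup V] [Module (ZMod 2) V]

lemma xel_sum_dvd {ι : Type*} (S : Finset ι) (hS : S.Nonempty) (y : ι → V) :
    ∃ e, ∏ j ∈ S, xel (y j) = xel (∑ j ∈ S, y j) * e := by
  classical
  induction hS using Finset.Nonempty.cons_induction with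
  | singleton a => exact ⟨1, by simp⟩
  | cons a S ha hS ih =>
    obtain ⟨e, he⟩ := ih
    refine ⟨xel (y a) * e, ?_⟩
    rw [Finset.prod_cons, Finset.sum_cons, he, ← mul_assoc, xel_mul_xel, mul_assoc]


end Part5

end Snq

open Snq in
/-- let `v₁, …, v_m` be nonzero vectors of `V`, let
`π_i : 𝔽₂[V] → 𝔽₂[V/span{vᵢ}]` be the algebra homomorphisms induced by the quotient maps
and `I_i` the augmentation ideals of the `𝔽₂[V/span{vᵢ}]`.  If `q ≥ 1` and `c ∈ I^q`
satisfies `π_i(c) ∈ I_i^{q+1}` for all `i`, then there is `c' ∈ I^q` with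
`c − c' ∈ I^{q+1}` and `π_i(c') = 0` for all `i`. -/
theorem lifting_snq {V : Type*} [AddCommGroup V] [Module (ZMod 2) V]
    [Module.Finite (ZMod 2) V] (m : ℕ) (v : Fin m → V) (hv : ∀ i, v i ≠ 0)
    (q : ℕ) (hq : 1 ≤ q) (c : AddMonoidAlgebra (ZMod 2) V) (hc : c ∈ augIdeal V ^ q)
    (hπ : ∀ i : Fin m,
      AddMonoidAlgebra.mapDomainAlgHom (ZMod 2) (ZMod 2)
          (Submodule.span (ZMod 2) {v i}).mkQ.toAddMonoidHom c
        ∈ augIdeal (V ⧸ Submodule.span (ZMod 2) {v i}) ^ (q + 1)) :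
    ∃ c' ∈ augIdeal V ^ q,
      c - c' ∈ augIdeal V ^ (q + 1) ∧
      ∀ i : Fin m,
        AddMonoidAlgebra.mapDomainAlgHom (ZMod 2) (ZMod 2)
          (Submodule.span (ZMod 2) {v i}).mkQ.toAddMonoidHom c' = 0 := by
  classical
  obtain ⟨b, hbsub, hbspan, hbLI⟩ := exists_linearIndependent (ZMod 2) (Set.range v)
  have hbfin : b.Finite := (Set.finite_range v).subset hbsub
  letI := hbfin.fintype
  set k := Fintype.card b with hk
  set eqv := (Fintype.equivFin b).symm with heqv
  set w : Fin k → V := fun j => ((eqv j : b) : V) with hw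
  have hwLI : LinearIndependent (ZMod 2) w := hbLI.comp eqv eqv.injective
  have hwrange : Set.range w = b := by
    rw [hw]
    rw [show (fun j => ((eqv j : b) : V)) = (fun x : b => (x : V)) ∘ eqv from rfl]
    rw [Set.range_comp, Equiv.range_eq_univ, Set.image_univ, Subtype.range_coe]
  -- hypothesis for KL'
  have hyp : ∀ j : Fin k, ∃ e, c - xel (w j) * e ∈ augIdeal V ^ (q+1) := by
    intro j
    have hmem : w j ∈ Set.range v := hbsub (by rw [← hwrange]; exact ⟨j, rfl⟩)
    obtain ⟨i, hi⟩ := hmem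
    obtain ⟨r, hr, hri⟩ := exists_emap_pow_preimage (Submodule.span (ZMod 2) {v i}).mkQ
      (Submodule.mkQ_surjective _) (hπ i)
    have hker : emap (spw (v i)).mkQ (c - r) = 0 := by
      rw [map_sub]
      rw [show (emap (spw (v i)).mkQ) c
        = AddMonoidAlgebra.mapDomainAlgHom (ZMod 2) (ZMod 2)
            (Submodule.span (ZMod 2) {v i}).mkQ.toAddMonoidHom c from rfl]
      rw [show (emap (spw (v i)).mkQ) r
        = AddMonoidAlgebra.mapDomainAlgHom (ZMod 2) (ZMod 2)
            (Submodule.span (ZMod 2) {v i}).mkQ.toAddMonoidHom r from rfl]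
      exact sub_eq_zero.mpr hri.symm
    obtain ⟨d, hd⟩ := (ker_emap_iff (v i) (hv i)).mp hker
    refine ⟨d, ?_⟩
    rw [← hi, ← hd]
    simpa using hr
  obtain ⟨e, he⟩ := KL' k w hwLI q c hyp
  refine ⟨(∏ j, xel (w j)) * e, ?_, he, ?_⟩
  · -- c' ∈ I^q
    have h1 : (∏ j, xel (w j)) * e = c - (c - (∏ j, xel (w j)) * e) := by ring
    rw [h1]
    refine Submodule.sub_mem _ hc ?_
    exact Ideal.pow_le_pow_right (by omega) he
  · intro i
    -- π i (∏) = 0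
    have hvi_span : v i ∈ Submodule.span (ZMod 2) (Set.range w) := by
      rw [hwrange, hbspan]
      exact Submodule.subset_span ⟨i, rfl⟩
    rw [Submodule.mem_span_range_iff_exists_fun] at hvi_span
    obtain ⟨t, ht⟩ := hvi_span
    set S : Finset (Fin k) := Finset.univ.filter (fun j => t j = 1) with hS
    have hsum : ∑ j ∈ S, w j = v i := by
      rw [← ht, hS, Finset.sum_filter]
      refine Finset.sum_congr rfl fun j _ => ?_
      rcases zmod2_cases (t j) with h | h
      · rw [h, if_neg (show ¬(0:ZMod 2) = 1 by decide), zero_smul]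
      · rw [h, if_pos rfl, one_smul]
    have hSne : S.Nonempty := by
      rw [Finset.nonempty_iff_ne_empty]
      intro hemp
      apply hv i
      rw [← hsum, hemp, Finset.sum_empty]
    -- the product of xels over S in the quotient is zero
    have hzero : (∏ j, xel ((spw (v i)).mkQ (w j))) = 0 := by
      obtain ⟨ee, hee⟩ := xel_sum_dvd S hSne (fun j => (spw (v i)).mkQ (w j))
      have hsq : (∑ j ∈ S, (spw (v i)).mkQ (w j)) = 0 := by
        rw [← map_sum, hsum, mkQ_self]
      rw [hsq, xel_zero, zero_mul] at hee
      rw [← Finset.prod_mul_prod_compl S (fun j => xel ((spw (v i)).mkQ (w j))), hee, zero_mul]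
    show emap (spw (v i)).mkQ ((∏ j, xel (w j)) * e) = 0
    rw [map_mul, map_prod]
    rw [show (∏ j, emap (spw (v i)).mkQ (xel (w j)))
        = ∏ j, xel ((spw (v i)).mkQ (w j)) from
      Finset.prod_congr rfl fun j _ => emap_xel _ _]
    rw [hzero, zero_mul]
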